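/- For every K₅-free graph G on n vertices, τ_B(G) ≤ b(G)·(n − b(G))/2 + 3·(n − b(G))²/16. -/

import Mathlib

open SimpleGraph Finset

variable {V : Type*} [Fintype V] [DecidableEq V]

/-- `A` is a triangle-independent edge set of `G`: a set of edges of `G`
containing at most one edge from each triangle of `G`. -/
def IsTriangleIndep (G : SimpleGraph V) (A : Finset (Sym2 V)) : Prop :=
  (A : Set (Sym2 V)) ⊆ G.edgeSet ∧
    ∀ a b c : V, G.Adj a b → G.Adj b c → G.Adj a c →
      ({s(a, b), s(b, c), s(a, c)} ∩ A).card ≤ 1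

/-- `α₁(G)`: the maximum size of a triangle-independent set in `G`. -/
noncomputable def alphaOne (G : SimpleGraph V) : ℕ :=
  sSup {k | ∃ A : Finset (Sym2 V), IsTriangleIndep G A ∧ A.card = k}

/-- `τ_B(G)`: the minimum size of an edge set of `G` whose deletion makes `G` bipartite. -/
noncomputable def tauB (G : SimpleGraph V) : ℕ :=
  sInf {k | ∃ D : Finset (Sym2 V), (D : Set (Sym2 V)) ⊆ G.edgeSet ∧
    (G.deleteEdges (D : Set (Sym2 V))).Colorable 2 ∧ D.card = k}

/-- `b(G)`: the maximum size of a vertex set inducing a bipartite subgraph of `G`. -/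
noncomputable def bipNum (G : SimpleGraph V) : ℕ :=
  sSup {k | ∃ B : Finset V, (G.induce (B : Set V)).Colorable 2 ∧ B.card = k}


set_option linter.unusedSectionVars false

open scoped Classical

/-- an edge is monochromatic under `g` -/
def MonoP (g : V → Bool) (e : Sym2 V) : Prop := ∀ x ∈ e, ∀ y ∈ e, g x = g y

lemma monoP_mk {g : V → Bool} {a b : V} : MonoP g s(a, b) ↔ g a = g b := by
  constructor
  · intro h; exact h a (Sym2.mem_mk_left a b) b (Sym2.mem_mk_right a b)
  · intro h x hx y hy
    rcases Sym2.mem_iff.1 hx with rfl | rfl <;> rcases Sym2.mem_iff.1 hy with rfl | rfl <;>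
      simp [h]

lemma greedy (R : Finset V) : ∀ (G : SimpleGraph V) (g₀ : V → Bool),
    ∃ g : V → Bool, (∀ v, v ∉ R → g v = g₀ v) ∧
      2 * (G.edgeFinset.filter (fun e => (∃ x ∈ e, x ∈ R) ∧ MonoP g e)).card
        ≤ (G.edgeFinset.filter (fun e => ∃ x ∈ e, x ∈ R)).card := by
  induction R using Finset.induction_on with
  | empty =>
    intro G g₀
    refine ⟨g₀, fun v _ => rfl, ?_⟩
    simp
  | @insert v R' hv ih =>
    intro G g₀
    set G' : SimpleGraph V := G.deleteEdges {e : Sym2 V | v ∈ e} with hG'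
    obtain ⟨g', hg'0, hg'⟩ := ih G' g₀
    -- choose the best color for v
    set Db : Bool → Finset (Sym2 V) :=
      fun b => G.edgeFinset.filter (fun e => v ∈ e ∧ MonoP (Function.update g' v b) e) with hDb
    have hdisj : Disjoint (Db true) (Db false) := by
      rw [Finset.disjoint_left]
      intro e het hef
      simp only [hDb, Finset.mem_filter] at het hef
      obtain ⟨he, hve, hmt⟩ := het
      obtain ⟨-, -, hmf⟩ := hef
      rw [mem_edgeFinset] at he
      induction e with
      | h a b =>
        have hab : a ≠ b := (G.ne_of_adj (by rwa [mem_edgeSet] at he))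
        rcases Sym2.mem_iff.1 hve with rfl | rfl
        · have h1 := monoP_mk.1 hmt
          have h2 := monoP_mk.1 hmf
          rw [Function.update_self, Function.update_of_ne (Ne.symm hab)] at h1 h2
          simp_all
        · have h1 := monoP_mk.1 hmt
          have h2 := monoP_mk.1 hmf
          rw [Function.update_self, Function.update_of_ne hab] at h1 h2
          simp_all
    have hsubv : ∀ b, Db b ⊆ G.edgeFinset.filter (fun e => v ∈ e) := by
      intro b e he
      simp only [hDb, Finset.mem_filter] at he ⊢
      exact ⟨he.1, he.2.1⟩
    have hsum : (Db true).card + (Db false).card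
        ≤ (G.edgeFinset.filter (fun e => v ∈ e)).card := by
      rw [← Finset.card_union_of_disjoint hdisj]
      exact Finset.card_le_card (Finset.union_subset (hsubv true) (hsubv false))
    obtain ⟨c, hc⟩ : ∃ c : Bool, 2 * (Db c).card ≤ (G.edgeFinset.filter (fun e => v ∈ e)).card := by
      by_cases h : (Db true).card ≤ (Db false).card
      · exact ⟨true, by omega⟩
      · exact ⟨false, by omega⟩
    set g : V → Bool := Function.update g' v c with hg
    refine ⟨g, ?_, ?_⟩
    · intro w hw
      rw [Finset.mem_insert, not_or] at hw
      rw [hg, Function.update_of_ne hw.1]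
      exact hg'0 w hw.2
    · -- counting
      have hDsub : G.edgeFinset.filter (fun e => (∃ x ∈ e, x ∈ insert v R') ∧ MonoP g e)
          ⊆ (Db c) ∪ G'.edgeFinset.filter (fun e => (∃ x ∈ e, x ∈ R') ∧ MonoP g' e) := by
        intro e he
        simp only [Finset.mem_filter] at he
        obtain ⟨he, ⟨x, hxe, hxR⟩, hm⟩ := he
        by_cases hve : v ∈ e
        · exact Finset.mem_union_left _ (by simp only [hDb, Finset.mem_filter]; exact ⟨he, hve, hm⟩)
        · refine Finset.mem_union_right _ ?_
          simp only [Finset.mem_filter, mem_edgeFinset, hG', edgeSet_deleteEdges]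
          refine ⟨⟨by rwa [mem_edgeFinset] at he, hve⟩, ⟨x, hxe, ?_⟩, ?_⟩
          · rcases Finset.mem_insert.1 hxR with rfl | hx
            · exact absurd hxe hve
            · exact hx
          · intro a ha b hb
            have hav : a ≠ v := fun h => hve (h ▸ ha)
            have hbv : b ≠ v := fun h => hve (h ▸ hb)
            have := hm a ha b hb
            rwa [hg, Function.update_of_ne hav, Function.update_of_ne hbv] at this
      have hTsub : (G.edgeFinset.filter (fun e => v ∈ e))
            ∪ G'.edgeFinset.filter (fun e => ∃ x ∈ e, x ∈ R')
          ⊆ G.edgeFinset.filter (fun e => ∃ x ∈ e, x ∈ insert v R') := by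
        intro e he
        rcases Finset.mem_union.1 he with h | h
        · simp only [Finset.mem_filter] at h ⊢
          exact ⟨h.1, v, h.2, Finset.mem_insert_self v R'⟩
        · simp only [Finset.mem_filter, mem_edgeFinset, hG', edgeSet_deleteEdges] at h ⊢
          obtain ⟨⟨h1, -⟩, x, hxe, hxR⟩ := h
          exact ⟨h1, x, hxe, Finset.mem_insert_of_mem hxR⟩
      have hTdisj : Disjoint (G.edgeFinset.filter (fun e => v ∈ e))
          (G'.edgeFinset.filter (fun e => ∃ x ∈ e, x ∈ R')) := by
        rw [Finset.disjoint_left]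
        intro e h1 h2
        simp only [Finset.mem_filter, mem_edgeFinset, hG', edgeSet_deleteEdges] at h1 h2
        exact h2.1.2 h1.2
      have h1 := Finset.card_le_card hDsub
      have h2 := Finset.card_union_le (Db c)
        (G'.edgeFinset.filter (fun e => (∃ x ∈ e, x ∈ R') ∧ MonoP g' e))
      have h3 := Finset.card_le_card hTsub
      rw [Finset.card_union_of_disjoint hTdisj] at h3
      have hg'' : 2 * (G'.edgeFinset.filter (fun e => (∃ x ∈ e, x ∈ R') ∧ MonoP g' e)).card
          ≤ (G'.edgeFinset.filter (fun e => ∃ x ∈ e, x ∈ R')).card := by convert hg'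
      omega

/-- edges of `G` within `S` that touch `T` are at most the sum over `T` of degrees into `S` -/
lemma card_touch_le (G : SimpleGraph V) (S T : Finset V) :
    ((G.edgeFinset.filter (fun e => ∀ x ∈ e, x ∈ S)).filter (fun e => ∃ x ∈ e, x ∈ T)).card
      ≤ ∑ u ∈ T, (S.filter (fun w => G.Adj u w)).card := by
  have hsub : (G.edgeFinset.filter (fun e => ∀ x ∈ e, x ∈ S)).filter (fun e => ∃ x ∈ e, x ∈ T)
      ⊆ T.biUnion (fun u => (S.filter (fun w => G.Adj u w)).image (fun w => s(u, w))) := by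
    intro e he
    simp only [Finset.mem_filter, mem_edgeFinset] at he
    obtain ⟨⟨he, hS⟩, x, hxe, hxT⟩ := he
    rw [Finset.mem_biUnion]
    induction e with
    | h a b =>
      have hadj : G.Adj a b := (mem_edgeSet G).1 he
      rcases Sym2.mem_iff.1 hxe with rfl | rfl
      · refine ⟨x, hxT, ?_⟩
        rw [Finset.mem_image]
        exact ⟨b, Finset.mem_filter.2 ⟨hS b (Sym2.mem_mk_right x b), hadj⟩, rfl⟩
      · refine ⟨x, hxT, ?_⟩
        rw [Finset.mem_image]
        exact ⟨a, Finset.mem_filter.2 ⟨hS a (Sym2.mem_mk_left a x), hadj.symm⟩, Sym2.eq_swap⟩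
  calc _ ≤ _ := Finset.card_le_card hsub
    _ ≤ _ := Finset.card_biUnion_le.trans (Finset.sum_le_sum fun u _ => Finset.card_image_le)

/-- Turán-type bound: if `S` contains no `(p+1)`-clique then the number of edges
within `S` is at most `(1 - 1/p) |S|² / 2`. -/
lemma turan_within (G : SimpleGraph V) : ∀ (p : ℕ) (S : Finset V),
    (∀ t : Finset V, t ⊆ S → ¬ G.IsNClique (p + 1) t) →
    2 * p * (G.edgeFinset.filter (fun e => ∀ x ∈ e, x ∈ S)).card ≤ (p - 1) * S.card ^ 2 := by
  intro p
  induction p with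
  | zero => intro S h; simp
  | succ p ih =>
    intro S hS
    by_cases hp0 : p = 0
    · -- no 2-clique in S: no edges within S
      subst hp0
      have : G.edgeFinset.filter (fun e => ∀ x ∈ e, x ∈ S) = ∅ := by
        rw [Finset.eq_empty_iff_forall_notMem]
        intro e he
        simp only [Finset.mem_filter, mem_edgeFinset] at he
        obtain ⟨he, hin⟩ := he
        induction e with
        | h a b =>
          have hadj : G.Adj a b := (mem_edgeSet G).1 he
          refine hS {a, b} ?_ ?_
          · intro x hx
            rcases Finset.mem_insert.1 hx with rfl | hx
            · exact hin x (Sym2.mem_mk_left x b)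
            · rw [Finset.mem_singleton] at hx; subst hx
              exact hin x (Sym2.mem_mk_right a x)
          · constructor
            · rw [Finset.coe_insert, Finset.coe_singleton]
              exact Set.pairwise_pair.2 (fun _ => ⟨hadj, hadj.symm⟩)
            · rw [Finset.card_insert_of_notMem (by simp [hadj.ne]), Finset.card_singleton]
      rw [this]; simp
    · rcases Finset.eq_empty_or_nonempty S with rfl | hSne
      · have h0 : G.edgeFinset.filter (fun e => ∀ x ∈ e, x ∈ (∅ : Finset V)) = ∅ := by
          rw [Finset.eq_empty_iff_forall_notMem]
          intro e he
          rw [Finset.mem_filter] at he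
          induction e with
          | h a b => exact absurd (he.2 a (Sym2.mem_mk_left a b)) (Finset.notMem_empty a)
        rw [h0]
        simp
      -- pick a vertex of maximum degree within S
      obtain ⟨v, hvS, hvmax⟩ := S.exists_max_image (fun u => (S.filter (fun w => G.Adj u w)).card) hSne
      set N : Finset V := S.filter (fun w => G.Adj v w) with hN
      have hNS : N ⊆ S := Finset.filter_subset _ _
      have hvN : v ∉ N := fun h => (G.irrefl (Finset.mem_filter.1 h).2)
      -- no (p+1)-clique within N
      have hNfree : ∀ t : Finset V, t ⊆ N → ¬ G.IsNClique (p + 1) t := by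
        intro t ht hcl
        refine hS (insert v t) ?_ ?_
        · intro x hx
          rcases Finset.mem_insert.1 hx with rfl | hx
          · exact hvS
          · exact hNS (ht hx)
        · exact hcl.insert (fun b hb => (Finset.mem_filter.1 (ht hb)).2)
      have hIH := ih N hNfree
      -- split edges within S
      set Δ := N.card with hΔ
      have hΔle : Δ ≤ S.card := Finset.card_le_card hNS
      have hsplit : (G.edgeFinset.filter (fun e => ∀ x ∈ e, x ∈ S)).card
          ≤ (G.edgeFinset.filter (fun e => ∀ x ∈ e, x ∈ N)).card
            + ((G.edgeFinset.filter (fun e => ∀ x ∈ e, x ∈ S)).filter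
                (fun e => ∃ x ∈ e, x ∈ S \ N)).card := by
        have hsub : G.edgeFinset.filter (fun e => ∀ x ∈ e, x ∈ S)
            ⊆ (G.edgeFinset.filter (fun e => ∀ x ∈ e, x ∈ N))
              ∪ ((G.edgeFinset.filter (fun e => ∀ x ∈ e, x ∈ S)).filter
                  (fun e => ∃ x ∈ e, x ∈ S \ N)) := by
          intro e he
          by_cases hN' : ∀ x ∈ e, x ∈ N
          · exact Finset.mem_union_left _
              (Finset.mem_filter.2 ⟨(Finset.mem_filter.1 he).1, hN'⟩)
          · push_neg at hN'
            obtain ⟨x, hxe, hxN⟩ := hN'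
            exact Finset.mem_union_right _ (Finset.mem_filter.2
              ⟨he, x, hxe, Finset.mem_sdiff.2 ⟨(Finset.mem_filter.1 he).2 x hxe, hxN⟩⟩)
        exact (Finset.card_le_card hsub).trans (Finset.card_union_le _ _)
      -- bound the crossing part
      have hcross : ((G.edgeFinset.filter (fun e => ∀ x ∈ e, x ∈ S)).filter
            (fun e => ∃ x ∈ e, x ∈ S \ N)).card ≤ (S.card - Δ) * Δ := by
        refine (card_touch_le G S (S \ N)).trans ?_
        calc ∑ u ∈ S \ N, (S.filter (fun w => G.Adj u w)).card
            ≤ ∑ _u ∈ S \ N, Δ :=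
              Finset.sum_le_sum (fun u hu => hvmax u (Finset.mem_sdiff.1 hu).1)
          _ = (S.card - Δ) * Δ := by
              rw [Finset.sum_const, smul_eq_mul, Finset.card_sdiff_of_subset hNS]
      -- put it together
      have hp1 : 1 ≤ p := Nat.one_le_iff_ne_zero.2 hp0
      set eS := (G.edgeFinset.filter (fun e => ∀ x ∈ e, x ∈ S)).card
      set eN := (G.edgeFinset.filter (fun e => ∀ x ∈ e, x ∈ N)).card
      set cr := ((G.edgeFinset.filter (fun e => ∀ x ∈ e, x ∈ S)).filter
            (fun e => ∃ x ∈ e, x ∈ S \ N)).card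
      set s := S.card
      -- goal : 2 * (p+1) * eS ≤ p * s^2
      rw [Nat.add_sub_cancel]
      have hkey : p * (2 * (p + 1) * eS) ≤ p * (p * s ^ 2) := by
        have hdle : (Δ : ℤ) ≤ (s : ℤ) := by exact_mod_cast hΔle
        have hcr' : (cr : ℤ) ≤ (((s - Δ) * Δ : ℕ) : ℤ) := by exact_mod_cast hcross
        simp only [Nat.cast_mul, Nat.cast_sub hΔle] at hcr'
        have hIH2 : ((2 * p * eN : ℕ) : ℤ) ≤ (((p - 1) * Δ ^ 2 : ℕ) : ℤ) := by exact_mod_cast hIH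
        simp only [Nat.cast_mul, Nat.cast_pow, Nat.cast_sub hp1, Nat.cast_ofNat] at hIH2
        push_cast at hIH2
        have heS' : (eS : ℤ) ≤ (eN : ℤ) + (cr : ℤ) := by exact_mod_cast hsplit
        have hfin : (p : ℤ) * (2 * (p + 1) * eS) ≤ (p : ℤ) * (p * s ^ 2) := by
          have hA := mul_le_mul_of_nonneg_left hIH2
            (show (0:ℤ) ≤ (p:ℤ) + 1 by positivity)
          have hB := mul_le_mul_of_nonneg_left hcr'
            (show (0:ℤ) ≤ 2 * (p:ℤ) * ((p:ℤ) + 1) by positivity)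
          have hC := mul_le_mul_of_nonneg_left heS'
            (show (0:ℤ) ≤ 2 * (p:ℤ) * ((p:ℤ) + 1) by positivity)
          nlinarith [sq_nonneg ((p : ℤ) * s - ((p : ℤ) + 1) * Δ), hA, hB, hC]
        exact_mod_cast hfin
      exact Nat.le_of_mul_le_mul_left hkey hp1

lemma cross_card_le (G : SimpleGraph V) (R : Finset V) :
    (G.edgeFinset.filter (fun e => (∃ x ∈ e, x ∈ R) ∧ ¬ ∀ x ∈ e, x ∈ R)).card
      ≤ Rᶜ.card * R.card := by
  have hsub : G.edgeFinset.filter (fun e => (∃ x ∈ e, x ∈ R) ∧ ¬ ∀ x ∈ e, x ∈ R)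
      ⊆ (Rᶜ ×ˢ R).image (fun p : V × V => s(p.1, p.2)) := by
    intro e he
    simp only [Finset.mem_filter] at he
    obtain ⟨he, ⟨x, hxe, hxR⟩, hna⟩ := he
    push_neg at hna
    obtain ⟨y, hye, hyR⟩ := hna
    rw [Finset.mem_image]
    induction e with
    | h a b =>
      rcases Sym2.mem_iff.1 hxe with rfl | rfl <;> rcases Sym2.mem_iff.1 hye with rfl | rfl
      · exact absurd hxR hyR
      · exact ⟨(y, x), Finset.mem_product.2 ⟨Finset.mem_compl.2 hyR, hxR⟩, Sym2.eq_swap⟩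
      · exact ⟨(y, x), Finset.mem_product.2 ⟨Finset.mem_compl.2 hyR, hxR⟩, rfl⟩
      · exact absurd hxR hyR
  calc _ ≤ _ := Finset.card_le_card hsub
    _ ≤ (Rᶜ ×ˢ R).card := Finset.card_image_le
    _ = _ := Finset.card_product _ _

lemma exists_bipNum_witness (G : SimpleGraph V) :
    ∃ B : Finset V, (G.induce (B : Set V)).Colorable 2 ∧ B.card = bipNum G := by
  have hne : {k | ∃ B : Finset V, (G.induce (B : Set V)).Colorable 2 ∧ B.card = k}.Nonempty := by
    refine ⟨0, (∅ : Finset V), ?_, by simp⟩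
    exact ⟨⟨fun _ => 0, fun {a b} _ => absurd a.2 (by simp)⟩⟩
  have hbdd : BddAbove {k | ∃ B : Finset V, (G.induce (B : Set V)).Colorable 2 ∧ B.card = k} := by
    refine ⟨Fintype.card V, ?_⟩
    rintro k ⟨B, -, rfl⟩
    exact B.card_le_univ.trans_eq Finset.card_univ
  obtain ⟨B, h1, h2⟩ := Nat.sSup_mem hne hbdd
  exact ⟨B, h1, h2⟩

/-- For every `K₅`-free graph `G` on `n` vertices,
`τ_B(G) ≤ b(G)(n - b(G))/2 + 3(n - b(G))²/16`. -/
theorem tauB_le_of_cliqueFree_five (G : SimpleGraph V) (h5 : G.CliqueFree 5) :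
    (tauB G : ℝ) ≤ (bipNum G : ℝ) * ((Fintype.card V : ℝ) - (bipNum G : ℝ)) / 2
      + 3 * ((Fintype.card V : ℝ) - (bipNum G : ℝ)) ^ 2 / 16 := by
  obtain ⟨B, hBcol, hBcard⟩ := exists_bipNum_witness G
  set R : Finset V := Bᶜ with hR
  -- a proper 2-coloring of B, as a Bool-coloring of V
  obtain ⟨c⟩ := hBcol
  set g₀ : V → Bool := fun v => if h : v ∈ B then decide (c ⟨v, by simpa using h⟩ = 1) else false
    with hg₀
  have hproper : ∀ a ∈ B, ∀ b ∈ B, G.Adj a b → g₀ a ≠ g₀ b := by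
    intro a ha b hb hadj
    have hcv : c ⟨a, by simpa using ha⟩ ≠ c ⟨b, by simpa using hb⟩ := by
      refine c.valid ?_
      exact hadj
    have hdec : ∀ u w : Fin 2, u ≠ w → decide (u = 1) ≠ decide (w = 1) := by decide
    simp only [hg₀, dif_pos ha, dif_pos hb]
    exact hdec _ _ hcv
  obtain ⟨g, hg0, hgcount⟩ := greedy R G g₀
  set D : Finset (Sym2 V) :=
    G.edgeFinset.filter (fun e => (∃ x ∈ e, x ∈ R) ∧ MonoP g e) with hD
  have hDsub : (D : Set (Sym2 V)) ⊆ G.edgeSet := by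
    intro e he
    rw [Finset.mem_coe, hD, Finset.mem_filter, mem_edgeFinset] at he
    exact he.1
  have hcol : (G.deleteEdges (D : Set (Sym2 V))).Colorable 2 := by
    refine ⟨⟨fun v => if g v then 1 else 0, ?_⟩⟩
    intro a b hadj
    rw [deleteEdges_adj] at hadj
    obtain ⟨hadj, hnD⟩ := hadj
    have hgne : g a ≠ g b := by
      intro hgab
      have hmono : MonoP g s(a, b) := monoP_mk.2 hgab
      by_cases htouch : ∃ x ∈ s(a, b), x ∈ R
      · refine hnD ?_
        rw [Finset.mem_coe, hD, Finset.mem_filter, mem_edgeFinset]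
        exact ⟨hadj, htouch, hmono⟩
      · push_neg at htouch
        have haB : a ∈ B := by
          have := htouch a (Sym2.mem_mk_left a b); rw [hR, Finset.mem_compl, not_not] at this
          exact this
        have hbB : b ∈ B := by
          have := htouch b (Sym2.mem_mk_right a b); rw [hR, Finset.mem_compl, not_not] at this
          exact this
        have ha' : g a = g₀ a := hg0 a (by rw [hR, Finset.mem_compl, not_not]; exact haB)
        have hb' : g b = g₀ b := hg0 b (by rw [hR, Finset.mem_compl, not_not]; exact hbB)
        exact hproper a haB b hbB hadj (by rw [← ha', ← hb', hgab])
    cases hga : g a <;> cases hgb : g b <;> simp_all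
  have htau : tauB G ≤ D.card := Nat.sInf_le ⟨D, hDsub, hcol, rfl⟩
  -- counting
  set T := G.edgeFinset.filter (fun e => ∃ x ∈ e, x ∈ R) with hT
  set EIn := G.edgeFinset.filter (fun e => ∀ x ∈ e, x ∈ R) with hEIn
  set Cr := G.edgeFinset.filter (fun e => (∃ x ∈ e, x ∈ R) ∧ ¬ ∀ x ∈ e, x ∈ R) with hCr
  have hTsplit : T.card ≤ EIn.card + Cr.card := by
    refine (Finset.card_le_card ?_).trans (Finset.card_union_le _ _)
    intro e he
    rw [hT, Finset.mem_filter] at he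
    by_cases hall : ∀ x ∈ e, x ∈ R
    · exact Finset.mem_union_left _ (Finset.mem_filter.2 ⟨he.1, hall⟩)
    · exact Finset.mem_union_right _ (Finset.mem_filter.2 ⟨he.1, he.2, hall⟩)
  have hIn : 2 * 4 * EIn.card ≤ (4 - 1) * R.card ^ 2 :=
    turan_within G 4 R (fun t _ hcl => h5 t hcl)
  have hCross : Cr.card ≤ B.card * R.card := by
    have := cross_card_le G R
    rwa [hR, compl_compl] at this
  -- cast to ℝ
  have hBn : B.card ≤ Fintype.card V := B.card_le_univ.trans_eq Finset.card_univ
  have hRcard : R.card = Fintype.card V - B.card := by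
    rw [hR, Finset.card_compl]
  have hcast : (Fintype.card V : ℝ) - (B.card : ℝ) = (R.card : ℝ) := by
    rw [hRcard, Nat.cast_sub hBn]
  rw [← hBcard, hcast]
  have f1 : (tauB G : ℝ) ≤ (D.card : ℝ) := by exact_mod_cast htau
  have f2 : 2 * (D.card : ℝ) ≤ (T.card : ℝ) := by exact_mod_cast hgcount
  have f3 : (T.card : ℝ) ≤ (EIn.card : ℝ) + (Cr.card : ℝ) := by exact_mod_cast hTsplit
  have f4 : 8 * (EIn.card : ℝ) ≤ 3 * (R.card : ℝ) ^ 2 := by exact_mod_cast hIn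
  have f5 : (Cr.card : ℝ) ≤ (B.card : ℝ) * (R.card : ℝ) := by exact_mod_cast hCross
  linarith
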